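/- arXiv:2603.25513 — 2 statements merged into one kernel-verified Lean document; each statement's English description precedes it below -/
import Mathlib

section
/- Let G be a graph and H an induced subgraph of finite adhesion in G, with dominated torso K. The K-projection S′ of any tendril S in G is a locally finite tour in K: an infinite walk in K visiting each vertex only finitely many times. -/
/-- A ray in `G`: a one-way infinite path. -/
def IsRay {V : Type*} (G : SimpleGraph V) (f : ℕ → V) : Prop :=
  Function.Injective f ∧ ∀ n, G.Adj (f n) (f (n + 1))

/-- `F` separates `U` from `S` in `G`: every path (walk) from a vertex of `U`
to a vertex of `S` meets `F`. -/
def Separates {V : Type*} (G : SimpleGraph V) (F U S : Set V) : Prop :=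
  ∀ u ∈ U, ∀ s ∈ S, ∀ p : G.Walk u s, ∃ x ∈ p.support, x ∈ F

/-- `U` is dispersed in `G`: every ray can be separated from `U` by a finite vertex set. -/
def Dispersed {V : Type*} (G : SimpleGraph V) (U : Set V) : Prop :=
  ∀ f : ℕ → V, IsRay G f → ∃ F : Set V, F.Finite ∧ Separates G F U (Set.range f)

/-- `v` is reachable from `u` by a walk avoiding `H` entirely. -/
def ReachOutside {V : Type*} (G : SimpleGraph V) (H : Set V) (u v : V) : Prop :=
  ∃ p : G.Walk u v, ∀ x ∈ p.support, x ∉ H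

/-- `D` is a connected component of `G − H` (the induced subgraph on `V(G) \ H`). -/
def IsComp {V : Type*} (G : SimpleGraph V) (H D : Set V) : Prop :=
  D.Nonempty ∧ ∀ u ∈ D, ∀ v : V, (v ∈ D ↔ v ∉ H ∧ ReachOutside G H u v)

/-- The neighborhood `N_G(D)`: vertices outside `D` adjacent in `G` to a vertex of `D`. -/
def nbhdOf {V : Type*} (G : SimpleGraph V) (D : Set V) : Set V :=
  {v | v ∉ D ∧ ∃ d ∈ D, G.Adj v d}

/-- `H` has finite adhesion in `G`: every component of `G − H` has finite neighborhood. -/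
def FiniteAdhesion {V : Type*} (G : SimpleGraph V) (H : Set V) : Prop :=
  ∀ D : Set V, IsComp G H D → (nbhdOf G D).Finite

/-- The component of `G − H` containing `u` (for `u ∉ H`). -/
def compOf {V : Type*} (G : SimpleGraph V) (H : Set V) (u : V) : Set V :=
  {v | v ∉ H ∧ ReachOutside G H u v}

/-- `𝒟′`: components of `G − H` whose adhesion set is shared by only finitely
many components. -/
def Dfin {V : Type*} (G : SimpleGraph V) (H : Set V) : Set (Set V) :=
  {D | IsComp G H D ∧ {D' | IsComp G H D' ∧ nbhdOf G D' = nbhdOf G D}.Finite}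

/-- `𝒟″`: components of `G − H` whose adhesion set is shared by infinitely
many components. -/
def Dinf {V : Type*} (G : SimpleGraph V) (H : Set V) : Set (Set V) :=
  {D | IsComp G H D ∧ ¬ {D' | IsComp G H D' ∧ nbhdOf G D' = nbhdOf G D}.Finite}

/-- `η` is an admissible contraction map: each `D ∈ 𝒟″` is contracted onto a vertex
`η D ∈ N_G(D)`, and for every `D ∈ 𝒟″` the map `η` restricted to the components
sharing the adhesion set `N_G(D)` surjects onto `N_G(D)`. -/
def EtaOK {V : Type*} (G : SimpleGraph V) (H : Set V) (η : Set V → V) : Prop :=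
  (∀ D ∈ Dinf G H, η D ∈ nbhdOf G D) ∧
  (∀ D ∈ Dinf G H, ∀ a ∈ nbhdOf G D,
    ∃ D' ∈ Dinf G H, nbhdOf G D' = nbhdOf G D ∧ η D' = a)

open Classical in
/-- The contraction map `ρ` onto the vertex set of the dominated torso:
vertices of `H` are kept, each `D ∈ 𝒟′` is contracted to the new vertex
`Sum.inr D`, and each `D ∈ 𝒟″` is contracted onto `η D ∈ N_G(D)`. -/
noncomputable def rho {V : Type*} (G : SimpleGraph V) (H : Set V) (η : Set V → V) :
    V → V ⊕ Set V := fun u =>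
  if u ∈ H then Sum.inl u
  else if compOf G H u ∈ Dfin G H then Sum.inr (compOf G H u)
  else Sum.inl (η (compOf G H u))

/-- The dominated torso `K` of `H` in `G`: the contraction minor of `G`
witnessed by `ρ`. -/
noncomputable def Torso {V : Type*} (G : SimpleGraph V) (H : Set V) (η : Set V → V) :
    SimpleGraph (V ⊕ Set V) where
  Adj a b := a ≠ b ∧ ∃ u v : V, rho G H η u = a ∧ rho G H η v = b ∧ G.Adj u v
  symm := by
    constructor
    rintro a b ⟨hne, u, v, hu, hv, huv⟩
    exact ⟨hne.symm, v, u, hv, hu, huv.symm⟩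
  loopless := by constructor; rintro a ⟨hne, -⟩; exact hne rfl

/-- The vertex set of the dominated torso. -/
def torsoVerts {V : Type*} (G : SimpleGraph V) (H : Set V) : Set (V ⊕ Set V) :=
  Sum.inl '' H ∪ Sum.inr '' Dfin G H

/-- A tendril in `G`: a ray with infinitely many vertices in `H`. -/
def IsTendril {V : Type*} (G : SimpleGraph V) (H : Set V) (f : ℕ → V) : Prop :=
  IsRay G f ∧ {n | f n ∈ H}.Infinite

open Classical in
/-- The `H`-masking of a sequence: vertices outside `H` are replaced by their
component of `G − H`. -/
noncomputable def mask {V : Type*} (G : SimpleGraph V) (H : Set V) : V → V ⊕ Set V :=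
  fun u => if u ∈ H then Sum.inl u else Sum.inr (compOf G H u)

/-- The indices of a ray kept by the `K`-projection: vertices of `H`, and the
first index of each maximal run of a component `D ∈ 𝒟′`. -/
def keepIdx {V : Type*} (G : SimpleGraph V) (H : Set V) (f : ℕ → V) (n : ℕ) : Prop :=
  f n ∈ H ∨
    (f n ∉ H ∧ compOf G H (f n) ∈ Dfin G H ∧
      (n = 0 ∨ mask G H (f (n - 1)) ≠ mask G H (f n)))

/-- The `K`-projection of a tendril: maximal runs of a component `D ∈ 𝒟′` are
replaced by the single vertex `v_D`, and terms in components of `𝒟″` are removed. -/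
noncomputable def rayProj {V : Type*} (G : SimpleGraph V) (H : Set V) (η : Set V → V)
    (f : ℕ → V) : ℕ → V ⊕ Set V :=
  fun m => rho G H η (f (Nat.nth (keepIdx G H f) m))

/-- `D̂′`: components of `𝒟′` whose contracted vertex lies in `F`. -/
def DhatFin {V : Type*} (G : SimpleGraph V) (H : Set V) (F : Set (V ⊕ Set V)) :
    Set (Set V) :=
  {D | D ∈ Dfin G H ∧ Sum.inr D ∈ F}

/-- `D̂″`: components `D ∈ 𝒟″` such that some term of the `H`-masking of the
tendril equals `D` and the next vertex of the tendril lies in `F`. -/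
def DhatInf {V : Type*} (G : SimpleGraph V) (H : Set V) (f : ℕ → V)
    (F : Set (V ⊕ Set V)) : Set (Set V) :=
  {D | D ∈ Dinf G H ∧ ∃ n : ℕ, f n ∉ H ∧ compOf G H (f n) = D ∧ Sum.inl (f (n + 1)) ∈ F}

/-- The `S`-modification `F_S` of a set `F ⊆ V(K)`. -/
def Smod {V : Type*} (G : SimpleGraph V) (H : Set V) (f : ℕ → V)
    (F : Set (V ⊕ Set V)) : Set V :=
  (Sum.inl ⁻¹' F ∩ H) ∪ ⋃ D ∈ DhatFin G H F ∪ DhatInf G H f F, nbhdOf G D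


section AuxLemmas

variable {V : Type*} {G : SimpleGraph V} {H : Set V} {η : Set V → V}

lemma reach_symm' {u v : V} (h : ReachOutside G H u v) : ReachOutside G H v u := by
  obtain ⟨p, hp⟩ := h
  exact ⟨p.reverse, fun x hx => hp x (by simpa using hx)⟩

lemma reach_trans' {u v w : V} (h1 : ReachOutside G H u v)
    (h2 : ReachOutside G H v w) : ReachOutside G H u w := by
  obtain ⟨p, hp⟩ := h1; obtain ⟨q, hq⟩ := h2
  refine ⟨p.append q, fun x hx => ?_⟩
  rcases (SimpleGraph.Walk.mem_support_append_iff p q).1 hx with h | h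
  · exact hp x h
  · exact hq x h

lemma reach_refl' {u : V} (hu : u ∉ H) : ReachOutside G H u u :=
  ⟨SimpleGraph.Walk.nil, by simp [hu]⟩

lemma reach_of_adj' {u v : V} (hu : u ∉ H) (hv : v ∉ H) (h : G.Adj u v) :
    ReachOutside G H u v := by
  refine ⟨h.toWalk, fun x hx => ?_⟩
  simp [SimpleGraph.Adj.toWalk] at hx
  rcases hx with rfl | rfl <;> assumption

lemma mem_compOf_self' {u : V} (hu : u ∉ H) : u ∈ compOf G H u :=
  ⟨hu, reach_refl' hu⟩

lemma isComp_compOf' {u : V} (hu : u ∉ H) : IsComp G H (compOf G H u) := by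
  refine ⟨⟨u, mem_compOf_self' hu⟩, fun w hw v => ?_⟩
  constructor
  · rintro ⟨hv, hr⟩
    exact ⟨hv, reach_trans' (reach_symm' hw.2) hr⟩
  · rintro ⟨hv, hr⟩
    exact ⟨hv, reach_trans' hw.2 hr⟩

lemma compOf_eq_of_mem' {D : Set V} (hD : IsComp G H D) {u : V} (hu : u ∈ D) :
    compOf G H u = D :=
  Set.ext fun v => (hD.2 u hu v).symm

lemma mem_D_not_H' {D : Set V} (hD : IsComp G H D) {v : V} (hv : v ∈ D) : v ∉ H :=
  ((hD.2 v hv v).1 hv).1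

lemma compOf_eq_of_adj' {u v : V} (hu : u ∉ H) (hv : v ∉ H) (h : G.Adj u v) :
    compOf G H u = compOf G H v := by
  ext w
  constructor
  · rintro ⟨hw, hr⟩
    exact ⟨hw, reach_trans' (reach_of_adj' hv hu h.symm) hr⟩
  · rintro ⟨hw, hr⟩
    exact ⟨hw, reach_trans' (reach_of_adj' hu hv h) hr⟩

lemma mem_nbhd_of_adj' {D : Set V} (hD : IsComp G H D) {a d : V} (ha : a ∈ H)
    (hd : d ∈ D) (h : G.Adj a d) : a ∈ nbhdOf G D :=
  ⟨fun haD => mem_D_not_H' hD haD ha, d, hd, h⟩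

lemma rho_mem_H' {u : V} (h : u ∈ H) : rho G H η u = Sum.inl u := by
  simp [rho, h]

lemma rho_fin' {u : V} (h : u ∉ H) (h2 : compOf G H u ∈ Dfin G H) :
    rho G H η u = Sum.inr (compOf G H u) := by
  simp [rho, h, h2]

lemma rho_inf' {u : V} (h : u ∉ H) (h2 : compOf G H u ∉ Dfin G H) :
    rho G H η u = Sum.inl (η (compOf G H u)) := by
  simp [rho, h, h2]

lemma mask_mem_H' {u : V} (h : u ∈ H) : mask G H u = Sum.inl u := by
  simp [mask, h]

lemma mask_not_mem_H' {u : V} (h : u ∉ H) : mask G H u = Sum.inr (compOf G H u) := by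
  simp [mask, h]

end AuxLemmas

/-- The `K`-projection of a tendril is a locally finite tour in the dominated
torso `K`: an infinite walk visiting each vertex only finitely many times. -/
theorem rayProj_locally_finite_tour {V : Type*} (G : SimpleGraph V) (H : Set V)
    (η : Set V → V) (hadh : FiniteAdhesion G H) (hη : EtaOK G H η)
    (f : ℕ → V) (hf : IsTendril G H f) :
    (∀ m : ℕ, (Torso G H η).Adj (rayProj G H η f m) (rayProj G H η f (m + 1))) ∧
    (∀ w : V ⊕ Set V, {m : ℕ | rayProj G H η f m = w}.Finite) := by
  obtain ⟨⟨hinj, hadjf⟩, hHinf⟩ := hf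
  set p := keepIdx G H f with hp_def
  have hp : (setOf p).Infinite := hHinf.mono fun n hn => Or.inl hn
  -- key adjacency lemma for consecutive kept indices
  have key : ∀ n n' : ℕ, p n → p n' → n < n' →
      (∀ k, n < k → k < n' → ¬ p k) →
      (Torso G H η).Adj (rho G H η (f n)) (rho G H η (f n')) := by
    intro n n' hkn hkn' hlt hbtw
    obtain ⟨t, rfl⟩ : ∃ t, n' = t + 1 := ⟨n' - 1, by omega⟩
    have hnotH : ∀ k, n < k → k < t + 1 → f k ∉ H :=
      fun k h1 h2 hH => hbtw k h1 h2 (Or.inl hH)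
    have hcomp : ∀ k, n < k → k ≤ t → compOf G H (f k) = compOf G H (f (n + 1)) := by
      intro k h1 h2
      induction k with
      | zero => omega
      | succ j ih =>
        by_cases hj : j + 1 = n + 1
        · rw [hj]
        · have hnj : n < j := by omega
          have h1' : f j ∉ H := hnotH j hnj (by omega)
          have h2' : f (j + 1) ∉ H := hnotH (j + 1) h1 (by omega)
          rw [← compOf_eq_of_adj' h1' h2' (hadjf j)]
          exact ih hnj (by omega)
    by_cases hnH : f n ∈ H
    · by_cases hn'H : f (t + 1) ∈ H
      · -- both endpoints in H
        by_cases hcons : t = n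
        · subst hcons
          refine ⟨?_, f t, f (t + 1), rfl, rfl, hadjf t⟩
          rw [rho_mem_H' hnH, rho_mem_H' hn'H]
          intro h
          exact absurd (hinj (Sum.inl.inj h)) (by omega)
        · -- a gap through a 𝒟″ component
          have hnt : n < t := by omega
          have h1H : f (n + 1) ∉ H := hnotH (n + 1) (by omega) (by omega)
          have hDc : IsComp G H (compOf G H (f (n + 1))) := isComp_compOf' h1H
          have hDnotfin : compOf G H (f (n + 1)) ∉ Dfin G H := by
            intro hfin
            refine hbtw (n + 1) (by omega) (by omega) (Or.inr ⟨h1H, hfin, Or.inr ?_⟩)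
            simp only [Nat.add_sub_cancel]
            rw [mask_mem_H' hnH, mask_not_mem_H' h1H]
            simp
          have hDinf : compOf G H (f (n + 1)) ∈ Dinf G H :=
            ⟨hDc, fun hfin => hDnotfin ⟨hDc, hfin⟩⟩
          have htD : f t ∈ compOf G H (f (n + 1)) := by
            rw [← hcomp t hnt le_rfl]
            exact mem_compOf_self' (hnotH t hnt (by omega))
          have hn'nb : f (t + 1) ∈ nbhdOf G (compOf G H (f (n + 1))) :=
            mem_nbhd_of_adj' hDc hn'H htD (hadjf t).symm
          obtain ⟨D', hD'inf, hnbeq, hη'⟩ := hη.2 _ hDinf (f (t + 1)) hn'nb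
          have hnnb : f n ∈ nbhdOf G (compOf G H (f (n + 1))) :=
            mem_nbhd_of_adj' hDc hnH (mem_compOf_self' h1H) (hadjf n)
          rw [← hnbeq] at hnnb
          obtain ⟨-, d, hdD', hadj_d⟩ := hnnb
          have hdH : d ∉ H := mem_D_not_H' hD'inf.1 hdD'
          have hdc : compOf G H d = D' := compOf_eq_of_mem' hD'inf.1 hdD'
          have hrd : rho G H η d = Sum.inl (f (t + 1)) := by
            rw [rho_inf' hdH (by rw [hdc]; exact fun hfin => hD'inf.2 hfin.2), hdc, hη']
          refine ⟨?_, f n, d, rfl, hrd.trans (rho_mem_H' hn'H).symm, hadj_d⟩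
          rw [rho_mem_H' hnH, rho_mem_H' hn'H]
          intro h
          exact absurd (hinj (Sum.inl.inj h)) (by omega)
      · -- f n ∈ H, f (t+1) starts a 𝒟′ run
        rcases hkn' with h | ⟨-, hDfin', -⟩
        · exact absurd h hn'H
        have ht_eq : t = n := by
          by_contra hne
          have hnt : n < t := by omega
          have h1H : f (n + 1) ∉ H := hnotH (n + 1) (by omega) (by omega)
          have hDnotfin : compOf G H (f (n + 1)) ∉ Dfin G H := by
            intro hfin
            refine hbtw (n + 1) (by omega) (by omega) (Or.inr ⟨h1H, hfin, Or.inr ?_⟩)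
            simp only [Nat.add_sub_cancel]
            rw [mask_mem_H' hnH, mask_not_mem_H' h1H]
            simp
          have htH : f t ∉ H := hnotH t hnt (by omega)
          have : compOf G H (f (t + 1)) = compOf G H (f (n + 1)) := by
            rw [← compOf_eq_of_adj' htH hn'H (hadjf t)]
            exact hcomp t hnt le_rfl
          exact hDnotfin (this ▸ hDfin')
        subst ht_eq
        refine ⟨?_, f t, f (t + 1), rfl, rfl, hadjf t⟩
        rw [rho_mem_H' hnH, rho_fin' hn'H hDfin']
        simp
    · -- f n ∉ H: start of a 𝒟′ run
      rcases hkn with h | ⟨-, hDfin, -⟩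
      · exact absurd h hnH
      have hftD : f t ∈ compOf G H (f n) := by
        by_cases hcons : t = n
        · subst hcons; exact mem_compOf_self' hnH
        · have hnt : n < t := by omega
          have h1H : f (n + 1) ∉ H := hnotH (n + 1) (by omega) (by omega)
          have : compOf G H (f t) = compOf G H (f n) := by
            rw [hcomp t hnt le_rfl, ← compOf_eq_of_adj' hnH h1H (hadjf n)]
          rw [← this]
          exact mem_compOf_self' (hnotH t hnt (by omega))
      have htH : f t ∉ H := mem_D_not_H' (isComp_compOf' hnH) hftD
      have htc : compOf G H (f t) = compOf G H (f n) :=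
        compOf_eq_of_mem' (isComp_compOf' hnH) hftD
      by_cases hn'H : f (t + 1) ∈ H
      · refine ⟨?_, f t, f (t + 1), ?_, rfl, hadjf t⟩
        · rw [rho_fin' hnH hDfin, rho_mem_H' hn'H]
          simp
        · rw [rho_fin' htH (by rw [htc]; exact hDfin), rho_fin' hnH hDfin, htc]
      · -- both runs outside H: impossible
        exfalso
        rcases hkn' with h | ⟨-, -, h0 | hm⟩
        · exact hn'H h
        · omega
        · refine hm ?_
          simp only [Nat.add_sub_cancel]
          rw [mask_not_mem_H' htH, mask_not_mem_H' hn'H,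
            compOf_eq_of_adj' htH hn'H (hadjf t)]
  constructor
  · intro m
    exact key (Nat.nth p m) (Nat.nth p (m + 1))
      (Nat.nth_mem_of_infinite hp m) (Nat.nth_mem_of_infinite hp (m + 1))
      ((Nat.nth_lt_nth hp).2 (by omega))
      (fun k h1 h2 hk =>
        absurd (Nat.le_nth_of_lt_nth_succ h2 hk) (by omega))
  · intro w
    have hfin : {n : ℕ | p n ∧ rho G H η (f n) = w}.Finite := by
      cases w with
      | inl v =>
        have hsub : {n : ℕ | p n ∧ rho G H η (f n) = Sum.inl v}.Subsingleton := by
          intro a ⟨hka, hra⟩ b ⟨hkb, hrb⟩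
          have hfa : f a = v := by
            by_cases hH : f a ∈ H
            · rw [rho_mem_H' hH] at hra; exact Sum.inl.inj hra
            · rcases hka with h | ⟨-, hDfin, -⟩
              · exact absurd h hH
              · rw [rho_fin' hH hDfin] at hra; exact absurd hra (by simp)
          have hfb : f b = v := by
            by_cases hH : f b ∈ H
            · rw [rho_mem_H' hH] at hrb; exact Sum.inl.inj hrb
            · rcases hkb with h | ⟨-, hDfin, -⟩
              · exact absurd h hH
              · rw [rho_fin' hH hDfin] at hrb; exact absurd hrb (by simp)
          exact hinj (hfa.trans hfb.symm)
        exact hsub.finite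
      | inr D =>
        by_cases hDc : IsComp G H D
        · have hN : (nbhdOf G D).Finite := hadh D hDc
          apply Set.Finite.subset
            (((hN.preimage hinj.injOn).image (· + 1)).insert 0)
          rintro n ⟨hk, hr⟩
          have hnH : f n ∉ H := by
            intro h; rw [rho_mem_H' h] at hr; exact absurd hr (by simp)
          rcases hk with h | ⟨-, hDfin, hrest⟩
          · exact absurd h hnH
          rw [rho_fin' hnH hDfin] at hr
          have hDn : compOf G H (f n) = D := Sum.inr.inj hr
          by_cases hn0 : n = 0
          · exact Set.mem_insert_iff.2 (Or.inl hn0)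
          · obtain ⟨k, rfl⟩ : ∃ k, n = k + 1 := ⟨n - 1, by omega⟩
            refine Set.mem_insert_iff.2 (Or.inr ⟨k, ?_, rfl⟩)
            have hkH : f k ∈ H := by
              by_contra hkH
              -- then k+1 would not be a keep index of 𝒟′ type with new mask
              have hmeq : mask G H (f k) = mask G H (f (k + 1)) := by
                rw [mask_not_mem_H' hkH, mask_not_mem_H' hnH,
                  compOf_eq_of_adj' hkH hnH (hadjf k)]
              rcases hrest with h0 | hm
              · omega
              · exact hm (by simpa using hmeq)
            have hfkD : f (k + 1) ∈ D := hDn ▸ mem_compOf_self' hnH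
            exact mem_nbhd_of_adj' hDc hkH hfkD (hadjf k)
        · have : {n : ℕ | p n ∧ rho G H η (f n) = Sum.inr D} = ∅ := by
            ext n
            simp only [Set.mem_setOf_eq, Set.mem_empty_iff_false, iff_false, not_and]
            intro hk hr
            have hnH : f n ∉ H := by
              intro h; rw [rho_mem_H' h] at hr; exact absurd hr (by simp)
            rcases hk with h | ⟨-, hDfin, -⟩
            · exact absurd h hnH
            rw [rho_fin' hnH hDfin] at hr
            exact hDc (Sum.inr.inj hr ▸ isComp_compOf' hnH)
          rw [this]; exact Set.finite_empty
    have hsub : {m : ℕ | rayProj G H η f m = w} ⊆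
        Nat.nth p ⁻¹' {n : ℕ | p n ∧ rho G H η (f n) = w} :=
      fun m hm => ⟨Nat.nth_mem_of_infinite hp m, hm⟩
    exact (hfin.preimage (Nat.nth_injective hp).injOn).subset hsub
end

section
/- (Augmentation Lemma, faithfulness) Let G be an infinite connected graph, H an infinite connected induced subgraph of finite adhesion in G, and K the dominated torso of H in G. If U ⊆ V(H) is dispersed in K, then U is dispersed in G. -/
-- ===== auxiliary lemmas =====
namespace TorsoAux
open SimpleGraph

variable {V : Type*} {G : SimpleGraph V} {H D : Set V} {u v a b : V}

lemma reach_self (hu : u ∉ H) : ReachOutside G H u u :=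
  ⟨Walk.nil, by intro x hx; simp only [Walk.support_nil, List.mem_singleton] at hx; subst hx; exact hu⟩

lemma reach_symm (h : ReachOutside G H u v) : ReachOutside G H v u := by
  obtain ⟨p, hp⟩ := h
  exact ⟨p.reverse, by intro x hx; rw [Walk.support_reverse, List.mem_reverse] at hx; exact hp x hx⟩

lemma reach_trans (h1 : ReachOutside G H u v) (h2 : ReachOutside G H v a) :
    ReachOutside G H u a := by
  obtain ⟨p, hp⟩ := h1; obtain ⟨q, hq⟩ := h2
  refine ⟨p.append q, ?_⟩
  intro x hx
  rw [Walk.mem_support_append_iff] at hx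
  rcases hx with hx | hx
  · exact hp x hx
  · exact hq x hx

lemma reach_of_adj (h : G.Adj u v) (hu : u ∉ H) (hv : v ∉ H) : ReachOutside G H u v := by
  refine ⟨Walk.cons h Walk.nil, ?_⟩
  intro x hx
  simp only [Walk.support_cons, Walk.support_nil, List.mem_cons, List.mem_singleton,
    List.not_mem_nil, or_false] at hx
  rcases hx with rfl | rfl
  · exact hu
  · exact hv

lemma mem_compOf_self (hu : u ∉ H) : u ∈ compOf G H u := ⟨hu, reach_self hu⟩

lemma compOf_eq_of_mem (hv : v ∈ compOf G H u) : compOf G H v = compOf G H u := by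
  obtain ⟨hvH, hr⟩ := hv
  ext w
  constructor
  · rintro ⟨hw, hr2⟩; exact ⟨hw, reach_trans hr hr2⟩
  · rintro ⟨hw, hr2⟩; exact ⟨hw, reach_trans (reach_symm hr) hr2⟩

lemma isComp_compOf (hu : u ∉ H) : IsComp G H (compOf G H u) := by
  refine ⟨⟨u, mem_compOf_self hu⟩, ?_⟩
  rintro x ⟨hxH, hrx⟩ w
  constructor
  · rintro ⟨hw, hrw⟩; exact ⟨hw, reach_trans (reach_symm hrx) hrw⟩
  · rintro ⟨hw, hrw⟩; exact ⟨hw, reach_trans hrx hrw⟩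

lemma isComp_not_mem_H (hD : IsComp G H D) (hv : v ∈ D) : v ∉ H :=
  ((hD.2 v hv v).mp hv).1

lemma compOf_eq_of_isComp (hD : IsComp G H D) (hv : v ∈ D) : compOf G H v = D := by
  ext w
  exact ((hD.2 v hv w)).symm

lemma sameComp (h : G.Adj u v) (hu : u ∉ H) (hv : v ∉ H) :
    compOf G H u = compOf G H v :=
  (compOf_eq_of_mem ⟨hv, reach_of_adj h hu hv⟩).symm

lemma nbhd_subset_H (hD : IsComp G H D) : nbhdOf G D ⊆ H := by
  rintro v ⟨hvD, d, hd, hadj⟩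
  by_contra hv
  exact hvD ((hD.2 d hd v).mpr ⟨hv, reach_of_adj hadj.symm (isComp_not_mem_H hD hd) hv⟩)

lemma cross {D : Set V} : ∀ {a b : V} (p : G.Walk a b),
    a ∉ D → b ∈ D → ∃ x ∈ p.support, x ∈ nbhdOf G D := by
  intro a b p
  induction p with
  | nil => intro ha hb; exact absurd hb ha
  | @cons a c b h q ih =>
    intro ha hb
    by_cases hc : c ∈ D
    · exact ⟨a, Walk.start_mem_support _, ⟨ha, c, hc, h⟩⟩
    · obtain ⟨x, hx, hxN⟩ := ih hc hb
      exact ⟨x, by rw [Walk.support_cons]; exact List.mem_cons_of_mem _ hx, hxN⟩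

lemma nbhd_nonempty (hG : G.Connected) (hH : H.Nonempty) (hD : IsComp G H D) :
    (nbhdOf G D).Nonempty := by
  obtain ⟨d, hd⟩ := hD.1
  obtain ⟨h₀, hh₀⟩ := hH
  obtain ⟨p⟩ := hG.preconnected h₀ d
  obtain ⟨x, _, hx⟩ := cross p (fun h => isComp_not_mem_H hD h hh₀) hd
  exact ⟨x, hx⟩

variable {η : Set V → V}

lemma rho_H (hu : u ∈ H) : rho G H η u = Sum.inl u := by simp [rho, hu]

lemma rho_fin (hu : u ∉ H) (h2 : compOf G H u ∈ Dfin G H) :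
    rho G H η u = Sum.inr (compOf G H u) := by simp [rho, hu, h2]

lemma rho_inf (hu : u ∉ H) (h2 : compOf G H u ∉ Dfin G H) :
    rho G H η u = Sum.inl (η (compOf G H u)) := by simp [rho, hu, h2]

lemma torso_adj (h : G.Adj u v) (hne : rho G H η u ≠ rho G H η v) :
    (Torso G H η).Adj (rho G H η u) (rho G H η v) :=
  ⟨hne, u, v, rfl, rfl, h⟩

lemma dinf_not_dfin (h : D ∈ Dinf G H) : D ∉ Dfin G H :=
  fun hf => h.2 hf.2

lemma not_dfin_dinf (hc : IsComp G H D) (h : D ∉ Dfin G H) : D ∈ Dinf G H :=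
  ⟨hc, fun hf => h ⟨hc, hf⟩⟩

lemma clique (hη : EtaOK G H η) (hD : D ∈ Dinf G H) (ha : a ∈ nbhdOf G D)
    (hb : b ∈ nbhdOf G D) (hab : a ≠ b) :
    (Torso G H η).Adj (Sum.inl a) (Sum.inl b) := by
  obtain ⟨D', hD', hND, hηD'⟩ := hη.2 D hD b hb
  have ha' : a ∈ nbhdOf G D' := hND ▸ ha
  obtain ⟨haD', d, hd, hadj⟩ := ha'
  have haH : a ∈ H := nbhd_subset_H hD.1 ha
  have hdH : d ∉ H := isComp_not_mem_H hD'.1 hd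
  have hcomp : compOf G H d = D' := compOf_eq_of_isComp hD'.1 hd
  have hrd : rho G H η d = Sum.inl b := by
    rw [rho_inf hdH (hcomp ▸ dinf_not_dfin hD'), hcomp, hηD']
  have hra : rho G H η a = Sum.inl a := rho_H haH
  have := torso_adj (η := η) hadj (by rw [hra, hrd]; simp [hab])
  rwa [hra, hrd] at this

lemma walkProj {VK : Type*} {K : SimpleGraph VK} (φ : V → VK)
    (hom : ∀ ⦃u v : V⦄, G.Adj u v → φ u = φ v ∨ K.Adj (φ u) (φ v)) :
    ∀ {a b : V} (p : G.Walk a b),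
      ∃ q : K.Walk (φ a) (φ b), ∀ x ∈ q.support, ∃ y ∈ p.support, φ y = x := by
  intro a b p
  induction p with
  | nil =>
    exact ⟨Walk.nil, by
      intro x hx
      simp only [Walk.support_nil, List.mem_singleton] at hx
      exact ⟨_, Walk.start_mem_support _, hx.symm⟩⟩
  | @cons a c b h q ih =>
    obtain ⟨q', hq'⟩ := ih
    rcases hom h with heq | hadj
    · refine ⟨q'.copy heq.symm rfl, ?_⟩
      intro x hx
      rw [Walk.support_copy] at hx
      obtain ⟨y, hy, hyx⟩ := hq' x hx
      exact ⟨y, by rw [Walk.support_cons]; exact List.mem_cons_of_mem _ hy, hyx⟩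
    · refine ⟨Walk.cons hadj q', ?_⟩
      intro x hx
      rw [Walk.support_cons] at hx
      rcases List.mem_cons.mp hx with rfl | hx
      · exact ⟨a, Walk.start_mem_support _, rfl⟩
      · obtain ⟨y, hy, hyx⟩ := hq' x hx
        exact ⟨y, by rw [Walk.support_cons]; exact List.mem_cons_of_mem _ hy, hyx⟩

lemma lazyWalk {VK : Type*} {K : SimpleGraph VK} (W : ℕ → VK)
    (hW : ∀ k, W k = W (k + 1) ∨ K.Adj (W k) (W (k + 1))) :
    ∀ a b : ℕ, a ≤ b → ∃ q : K.Walk (W a) (W b),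
      ∀ x ∈ q.support, ∃ k, a ≤ k ∧ k ≤ b ∧ W k = x := by
  intro a b hab
  induction b, hab using Nat.le_induction with
  | base =>
    exact ⟨Walk.nil, by
      intro x hx
      simp only [Walk.support_nil, List.mem_singleton] at hx
      exact ⟨a, le_rfl, le_rfl, hx.symm⟩⟩
  | succ b hab ih =>
    obtain ⟨q, hq⟩ := ih
    rcases hW b with heq | hadj
    · refine ⟨q.copy rfl heq, ?_⟩
      intro x hx
      rw [Walk.support_copy] at hx
      obtain ⟨k, h1, h2, h3⟩ := hq x hx
      exact ⟨k, h1, by omega, h3⟩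
    · refine ⟨q.append (Walk.cons hadj Walk.nil), ?_⟩
      intro x hx
      rw [Walk.mem_support_append_iff] at hx
      rcases hx with hx | hx
      · obtain ⟨k, h1, h2, h3⟩ := hq x hx
        exact ⟨k, h1, by omega, h3⟩
      · simp only [Walk.support_cons, Walk.support_nil, List.mem_cons, List.mem_singleton,
          List.not_mem_nil, or_false] at hx
        rcases hx with rfl | rfl
        · exact ⟨b, by omega, by omega, rfl⟩
        · exact ⟨b + 1, by omega, le_rfl, rfl⟩

lemma rayExtract {VK : Type*} {K : SimpleGraph VK} (W : ℕ → VK)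
    (hW : ∀ k, W k = W (k + 1) ∨ K.Adj (W k) (W (k + 1)))
    (hfin : ∀ x, {k | W k = x}.Finite) :
    ∃ (r : ℕ → VK) (ns : ℕ → ℕ), IsRay K r ∧ StrictMono ns ∧ ∀ j, r j = W (ns j) := by
  have hne : ∀ k : ℕ, ((hfin (W k)).toFinset).Nonempty :=
    fun k => ⟨k, by simp⟩
  set last : ℕ → ℕ := fun k => ((hfin (W k)).toFinset).max' (hne k) with hlastdef
  have hlast1 : ∀ k, W (last k) = W k := by
    intro k
    have := Finset.max'_mem _ (hne k)
    simpa using this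
  have hlast2 : ∀ k m, W m = W k → m ≤ last k := by
    intro k m h
    exact Finset.le_max' _ m (by simpa using h)
  have hlast3 : ∀ k, k ≤ last k := fun k => hlast2 k k rfl
  set ns : ℕ → ℕ := fun j => Nat.rec (last 0) (fun _ n => last (n + 1)) j with hnsdef
  have hns0 : ns 0 = last 0 := rfl
  have hnsS : ∀ j, ns (j + 1) = last (ns j + 1) := fun j => rfl
  have key : ∀ j m, W m = W (ns j) → m ≤ ns j := by
    intro j
    cases j with
    | zero =>
      intro m h
      rw [hns0] at h ⊢
      exact hlast2 0 m (h.trans (hlast1 0))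
    | succ j =>
      intro m h
      rw [hnsS] at h ⊢
      exact hlast2 _ m (h.trans (hlast1 _))
  have hmono : ∀ j, ns j < ns (j + 1) := by
    intro j
    rw [hnsS]
    have := hlast3 (ns j + 1)
    omega
  have hadj : ∀ j, K.Adj (W (ns j)) (W (ns (j + 1))) := by
    intro j
    have hne' : W (ns j) ≠ W (ns j + 1) := by
      intro h
      have := key j (ns j + 1) h.symm
      omega
    have heq : W (ns (j + 1)) = W (ns j + 1) := by rw [hnsS]; exact hlast1 _
    rw [heq]
    rcases hW (ns j) with h | h
    · exact absurd h hne'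
    · exact h
  have hsm : StrictMono ns := strictMono_nat_of_lt_succ hmono
  refine ⟨fun j => W (ns j), ns, ⟨?_, hadj⟩, hsm, fun j => rfl⟩
  intro i j h
  by_contra hij
  rcases Nat.lt_or_ge i j with hlt | hge
  · have := key i (ns j) h.symm
    exact absurd (hsm hlt) (by omega)
  · have hlt : j < i := by omega
    have := key j (ns i) h
    exact absurd (hsm hlt) (by omega)

end TorsoAux

open TorsoAux SimpleGraph in
/-- Augmentation Lemma (faithfulness): if `U ⊆ V(H)` is dispersed in the dominated
torso `K` of `H` in `G`, then `U` is dispersed in `G`. -/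
theorem torso_faithful {V : Type*} (G : SimpleGraph V) (H : Set V) (η : Set V → V)
    (hVinf : Infinite V) (hG : G.Connected)
    (hHinf : H.Infinite) (hHconn : (G.induce H).Connected)
    (hadh : FiniteAdhesion G H) (hη : EtaOK G H η)
    (U : Set V) (hUH : U ⊆ H)
    (hU : Dispersed (Torso G H η) (Sum.inl '' U)) :
    Dispersed G U := by
  classical
  intro f hf
  by_cases hfin : {n | f n ∈ H}.Finite
  · -- Case 2: the ray eventually stays in one component of G − H
    obtain ⟨N, hN⟩ : ∃ N, ∀ k, f k ∈ H → k ≤ N := by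
      obtain ⟨N, hN⟩ := hfin.bddAbove
      exact ⟨N, fun k hk => hN hk⟩
    have hfN : f (N + 1) ∉ H := fun h => by have := hN _ h; omega
    have hD : IsComp G H (compOf G H (f (N + 1))) := isComp_compOf hfN
    have hmem : ∀ k, N + 1 ≤ k → f k ∈ compOf G H (f (N + 1)) := by
      intro k hk
      induction k, hk using Nat.le_induction with
      | base => exact mem_compOf_self hfN
      | succ k hk ih =>
        have h1 : f k ∉ H := isComp_not_mem_H hD ih
        have h2 : f (k + 1) ∉ H := fun h => by have := hN _ h; omega
        have h3 : compOf G H (f k) = compOf G H (f (N + 1)) :=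
          compOf_eq_of_isComp hD ih
        have h4 := sameComp (G := G) (H := H) (hf.2 k) h1 h2
        rw [← h3, h4]
        exact mem_compOf_self h2
    refine ⟨nbhdOf G (compOf G H (f (N + 1))) ∪ f '' Set.Iic N,
      (hadh _ hD).union ((Set.finite_Iic N).image f), ?_⟩
    intro u hu s hs p
    obtain ⟨n, rfl⟩ := hs
    by_cases hn : n ≤ N
    · exact ⟨f n, p.end_mem_support, Or.inr ⟨n, hn, rfl⟩⟩
    · have hfn : f n ∈ compOf G H (f (N + 1)) := hmem n (by omega)
      have huD : u ∉ compOf G H (f (N + 1)) := fun h => isComp_not_mem_H hD h (hUH hu)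
      obtain ⟨x, hx, hxN⟩ := cross p huD hfn
      exact ⟨x, hx, Or.inl hxN⟩
  · -- Case 1: the ray meets H infinitely often
    have hinf : {n | f n ∈ H}.Infinite := hfin
    have hex : ∀ k : ℕ, ∃ j, k ≤ j ∧ f j ∈ H := by
      intro k
      by_contra hcon
      push_neg at hcon
      refine hinf (Set.Finite.subset (Set.finite_Iio k) ?_)
      intro j hj
      by_contra hjk
      exact hcon j (by simpa using hjk) hj
    set nextH : ℕ → ℕ := fun k => Nat.find (hex k) with hnextHdef
    have hnx1 : ∀ k, k ≤ nextH k ∧ f (nextH k) ∈ H := fun k => Nat.find_spec (hex k)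
    have hnx2 : ∀ k j, k ≤ j → f j ∈ H → nextH k ≤ j :=
      fun k j h1 h2 => Nat.find_min' (hex k) ⟨h1, h2⟩
    have hnx3 : ∀ k j, k ≤ j → j < nextH k → f j ∉ H :=
      fun k j h1 h2 h3 => absurd (hnx2 k j h1 h3) (by omega)
    have hnxge : ∀ k, f k ∉ H → k + 1 ≤ nextH k := by
      intro k h
      have h1 := (hnx1 k).1
      have h2 := (hnx1 k).2
      rcases Nat.lt_or_ge k (nextH k) with h3 | h3
      · omega
      · have h4 : nextH k = k := by omega
        rw [h4] at h2
        exact absurd h2 h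
    have hnxS : ∀ k, f k ∉ H → nextH (k + 1) = nextH k := by
      intro k h
      apply le_antisymm
      · exact hnx2 (k + 1) (nextH k) (hnxge k h) (hnx1 k).2
      · exact hnx2 k (nextH (k + 1)) (by have := (hnx1 (k + 1)).1; omega) (hnx1 (k + 1)).2
    -- run contiguity
    have hrun : ∀ k j, k ≤ j → j < nextH k → f j ∉ H ∧ compOf G H (f j) = compOf G H (f k) := by
      intro k j hkj
      induction j, hkj using Nat.le_induction with
      | base => intro h2; exact ⟨hnx3 k k le_rfl h2, rfl⟩
      | succ j hkj ih =>
        intro h2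
        obtain ⟨hj1, hj2⟩ := ih (by omega)
        have hj3 : f (j + 1) ∉ H := hnx3 k (j + 1) (by omega) h2
        exact ⟨hj3, by rw [← sameComp (G := G) (H := H) (hf.2 j) hj1 hj3, hj2]⟩
    have hNmem : ∀ k, f k ∉ H → f (nextH k) ∈ nbhdOf G (compOf G H (f k)) := by
      intro k hk
      have hk1 : k + 1 ≤ nextH k := hnxge k hk
      obtain ⟨m, hm⟩ : ∃ m, nextH k = m + 1 := ⟨nextH k - 1, by omega⟩
      have hrm := hrun k m (by omega) (by omega)
      have hfm : f m ∈ compOf G H (f k) := by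
        rw [← hrm.2]; exact mem_compOf_self hrm.1
      refine ⟨?_, f m, hfm, ?_⟩
      · intro hmem
        exact isComp_not_mem_H (isComp_compOf hk) hmem (hnx1 k).2
      · rw [hm]; exact (hf.2 m).symm
    -- the lazy walk W in the torso K
    set K := Torso G H η with hKdef
    set W : ℕ → V ⊕ Set V := fun k =>
      if f k ∈ H then Sum.inl (f k)
      else if compOf G H (f k) ∈ Dfin G H then Sum.inr (compOf G H (f k))
      else Sum.inl (f (nextH k)) with hWdef
    have hW1 : ∀ k, f k ∈ H → W k = Sum.inl (f k) := by
      intro k h; simp only [hWdef, if_pos h]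
    have hW2 : ∀ k, f k ∉ H → compOf G H (f k) ∈ Dfin G H →
        W k = Sum.inr (compOf G H (f k)) := by
      intro k h h2; simp only [hWdef, if_neg h, if_pos h2]
    have hW3 : ∀ k, f k ∉ H → compOf G H (f k) ∉ Dfin G H →
        W k = Sum.inl (f (nextH k)) := by
      intro k h h2; simp only [hWdef, if_neg h, if_neg h2]
    have hfne : ∀ {i j : ℕ}, i ≠ j → f i ≠ f j := by
      intro i j hij h; exact hij (hf.1 h)
    have hlazy : ∀ k, W k = W (k + 1) ∨ K.Adj (W k) (W (k + 1)) := by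
      intro k
      by_cases h1 : f k ∈ H
      · by_cases h2 : f (k + 1) ∈ H
        · right
          rw [hW1 k h1, hW1 (k + 1) h2]
          have hA := torso_adj (η := η) (hf.2 k)
            (by rw [rho_H h1, rho_H h2]; simp only [ne_eq, Sum.inl.injEq]
                exact hfne (by omega))
          rwa [rho_H h1, rho_H h2] at hA
        · by_cases h3 : compOf G H (f (k + 1)) ∈ Dfin G H
          · right
            rw [hW1 k h1, hW2 (k + 1) h2 h3]
            have hA := torso_adj (η := η) (hf.2 k)
              (by rw [rho_H h1, rho_fin h2 h3]; simp)
            rwa [rho_H h1, rho_fin h2 h3] at hA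
          · right
            rw [hW1 k h1, hW3 (k + 1) h2 h3]
            have hDc : IsComp G H (compOf G H (f (k + 1))) := isComp_compOf h2
            refine clique hη (not_dfin_dinf hDc h3) ?_ (hNmem (k + 1) h2) ?_
            · exact ⟨fun hx => isComp_not_mem_H hDc hx h1, f (k + 1),
                mem_compOf_self h2, hf.2 k⟩
            · refine hfne ?_
              have := (hnx1 (k + 1)).1; omega
      · by_cases h2 : f (k + 1) ∈ H
        · by_cases h3 : compOf G H (f k) ∈ Dfin G H
          · right
            rw [hW2 k h1 h3, hW1 (k + 1) h2]
            have hA := torso_adj (η := η) (hf.2 k)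
              (by rw [rho_fin h1 h3, rho_H h2]; simp)
            rwa [rho_fin h1 h3, rho_H h2] at hA
          · left
            rw [hW3 k h1 h3, hW1 (k + 1) h2]
            have : nextH k = k + 1 :=
              le_antisymm (hnx2 k (k + 1) (by omega) h2) (hnxge k h1)
            rw [this]
        · have hc : compOf G H (f k) = compOf G H (f (k + 1)) :=
            sameComp (G := G) (H := H) (hf.2 k) h1 h2
          by_cases h3 : compOf G H (f k) ∈ Dfin G H
          · left
            rw [hW2 k h1 h3, hW2 (k + 1) h2 (hc ▸ h3), hc]
          · left
            rw [hW3 k h1 h3, hW3 (k + 1) h2 (hc ▸ h3), hnxS k h1]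
    -- each vertex is visited finitely often
    have hvisitD : ∀ D : Set V, IsComp G H D → {k | f k ∈ D}.Finite := by
      intro D hD
      have hA : (nbhdOf G D).Finite := hadh D hD
      have hpre : (f ⁻¹' nbhdOf G D).Finite := hA.preimage hf.1.injOn
      set E := {e : ℕ | f e ∈ D ∧ (e = 0 ∨ f (e - 1) ∉ D)} with hEdef
      have hE : E.Finite := by
        apply Set.Finite.subset (Set.Finite.insert 0 (hpre.image (· + 1)))
        rintro e ⟨he1, he2⟩
        rcases Nat.eq_zero_or_pos e with rfl | hpos
        · exact Set.mem_insert _ _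
        · have he3 : f (e - 1) ∉ D := by
            rcases he2 with h | h
            · omega
            · exact h
          refine Set.mem_insert_iff.mpr (Or.inr ⟨e - 1, ?_, by show e - 1 + 1 = e; omega⟩)
          refine ⟨he3, f e, he1, ?_⟩
          have := hf.2 (e - 1)
          have he4 : e - 1 + 1 = e := by omega
          rwa [he4] at this
      have hEntry : ∀ k, f k ∈ D → ∃ e ∈ E, k < nextH e := by
        intro k hk
        have key : ∀ k, f k ∈ D →
            ∃ e, e ∈ E ∧ e ≤ k ∧ ∀ j, e ≤ j → j ≤ k → f j ∈ D := by
          intro k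
          induction k with
          | zero =>
            intro hk
            refine ⟨0, ⟨hk, Or.inl rfl⟩, le_rfl, fun j h1 h2 => ?_⟩
            have hj0 : j = 0 := by omega
            rw [hj0]
            exact hk
          | succ k ih =>
            intro hk
            by_cases hfk : f k ∈ D
            · obtain ⟨e, he, hek, hall⟩ := ih hfk
              refine ⟨e, he, by omega, fun j h1 h2 => ?_⟩
              rcases Nat.lt_or_ge j (k + 1) with h | h
              · exact hall j h1 (by omega)
              · have : j = k + 1 := by omega
                rw [this]; exact hk
            · refine ⟨k + 1, ⟨hk, Or.inr (by simpa using hfk)⟩, le_rfl,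
                fun j h1 h2 => ?_⟩
              have : j = k + 1 := by omega
              rw [this]; exact hk
        obtain ⟨e, he, hek, hall⟩ := key k hk
        refine ⟨e, he, ?_⟩
        by_contra h
        push_neg at h
        exact isComp_not_mem_H hD (hall _ (hnx1 e).1 h) (hnx1 e).2
      apply Set.Finite.subset (hE.biUnion (fun e _ => Set.finite_Iio (nextH e)))
      intro k hk
      obtain ⟨e, he, hlt⟩ := hEntry k hk
      exact Set.mem_biUnion he hlt
    have hvisit : ∀ x : V ⊕ Set V, {k | W k = x}.Finite := by
      intro x
      cases x with
      | inr D =>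
        have hsub : {k | W k = Sum.inr D} ⊆ {k | f k ∉ H ∧ compOf G H (f k) = D} := by
          intro k hk
          simp only [Set.mem_setOf_eq, hWdef] at hk
          by_cases h1 : f k ∈ H
          · rw [if_pos h1] at hk; exact absurd hk (by simp)
          · rw [if_neg h1] at hk
            by_cases h2 : compOf G H (f k) ∈ Dfin G H
            · rw [if_pos h2] at hk
              exact ⟨h1, Sum.inr.inj hk⟩
            · rw [if_neg h2] at hk; exact absurd hk (by simp)
        rcases Set.eq_empty_or_nonempty {k | W k = Sum.inr D} with he | ⟨k₀, hk₀⟩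
        · rw [he]; exact Set.finite_empty
        · obtain ⟨hk₁, hk₂⟩ := hsub hk₀
          have hDc : IsComp G H D := hk₂ ▸ isComp_compOf hk₁
          apply Set.Finite.subset (hvisitD D hDc)
          intro k hk
          obtain ⟨h1, h2⟩ := hsub hk
          rw [← h2]
          exact mem_compOf_self h1
      | inl h =>
        have hsub : {k | W k = Sum.inl h} ⊆
            {k | f k = h} ∪ {k | f k ∉ H ∧ f (nextH k) = h} := by
          intro k hk
          simp only [Set.mem_setOf_eq, hWdef] at hk
          by_cases h1 : f k ∈ H
          · rw [if_pos h1] at hk; exact Or.inl (Sum.inl.inj hk)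
          · rw [if_neg h1] at hk
            by_cases h2 : compOf G H (f k) ∈ Dfin G H
            · rw [if_pos h2] at hk; exact absurd hk (by simp)
            · rw [if_neg h2] at hk; exact Or.inr ⟨h1, Sum.inl.inj hk⟩
        apply Set.Finite.subset _ hsub
        apply Set.Finite.union
        · apply Set.Subsingleton.finite
          intro i hi j hj
          exact hf.1 (hi.trans hj.symm)
        · rcases Set.eq_empty_or_nonempty {k | f k ∉ H ∧ f (nextH k) = h} with he | ⟨k₀, hk₀⟩
          · rw [he]; exact Set.finite_empty
          · apply Set.Finite.subset (Set.finite_Iic (nextH k₀))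
            rintro k ⟨h1, h2⟩
            have : nextH k = nextH k₀ := hf.1 (h2.trans hk₀.2.symm)
            have := (hnx1 k).1
            simp only [Set.mem_Iic]
            omega
    -- extract a genuine ray in K and get a separator F
    obtain ⟨r, ns, hray, hmono, hrW⟩ := rayExtract W hlazy hvisit
    obtain ⟨F, hFfin, hFsep⟩ := hU r hray
    have hWF : {k | W k ∈ F}.Finite := by
      apply Set.Finite.subset (hFfin.biUnion fun x _ => hvisit x)
      intro k hk
      exact Set.mem_biUnion hk rfl
    obtain ⟨K₀, hK₀⟩ : ∃ K₀, ∀ k, W k ∈ F → k ≤ K₀ := by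
      obtain ⟨K₀, hK₀⟩ := hWF.bddAbove
      exact ⟨K₀, fun k hk => hK₀ hk⟩
    -- choice of representatives avoiding F
    have hHne : H.Nonempty := hHinf.nonempty
    set σ : Set V → V := fun D =>
      if hx : ∃ a, a ∈ nbhdOf G D ∧ Sum.inl a ∉ F then hx.choose
      else if hx2 : (nbhdOf G D).Nonempty then hx2.choose
      else hHne.choose with hσdef
    have hσ1 : ∀ D : Set V, IsComp G H D → σ D ∈ nbhdOf G D := by
      intro D hD
      simp only [hσdef]
      split_ifs with hx hx2
      · exact hx.choose_spec.1
      · exact hx2.choose_spec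
      · exact absurd (nbhd_nonempty hG hHne hD) hx2
    have hσ2 : ∀ D : Set V, Sum.inl (σ D) ∈ F → ∀ a ∈ nbhdOf G D, Sum.inl a ∈ F := by
      intro D h a ha
      by_contra hn
      have hx : ∃ a, a ∈ nbhdOf G D ∧ Sum.inl a ∉ F := ⟨a, ha, hn⟩
      simp only [hσdef, dif_pos hx] at h
      exact hx.choose_spec.2 h
    -- the projection φ
    set φ : V → V ⊕ Set V := fun v =>
      if v ∈ H then Sum.inl v
      else if compOf G H v ∈ Dfin G H then Sum.inr (compOf G H v)
      else Sum.inl (σ (compOf G H v)) with hφdef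
    have hφ1 : ∀ v, v ∈ H → φ v = Sum.inl v := by
      intro v h; simp only [hφdef, if_pos h]
    have hφ2 : ∀ v, v ∉ H → compOf G H v ∈ Dfin G H → φ v = Sum.inr (compOf G H v) := by
      intro v h h2; simp only [hφdef, if_neg h, if_pos h2]
    have hφ3 : ∀ v, v ∉ H → compOf G H v ∉ Dfin G H →
        φ v = Sum.inl (σ (compOf G H v)) := by
      intro v h h2; simp only [hφdef, if_neg h, if_neg h2]
    have haux : ∀ u v : V, G.Adj u v → u ∈ H → v ∉ H →
        φ u = φ v ∨ K.Adj (φ u) (φ v) := by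
      intro u v hadj hu hv
      by_cases h3 : compOf G H v ∈ Dfin G H
      · right
        rw [hφ1 u hu, hφ2 v hv h3]
        have hA := torso_adj (η := η) hadj (by rw [rho_H hu, rho_fin hv h3]; simp)
        rwa [rho_H hu, rho_fin hv h3] at hA
      · have hDc : IsComp G H (compOf G H v) := isComp_compOf hv
        have hσm := hσ1 _ hDc
        have hu' : u ∈ nbhdOf G (compOf G H v) :=
          ⟨fun hx => isComp_not_mem_H hDc hx hu, v, mem_compOf_self hv, hadj⟩
        by_cases he : σ (compOf G H v) = u
        · left
          rw [hφ1 u hu, hφ3 v hv h3, he]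
        · right
          rw [hφ1 u hu, hφ3 v hv h3]
          exact clique hη (not_dfin_dinf hDc h3) hu' hσm (fun h => he h.symm)
    have hhom : ∀ ⦃u v : V⦄, G.Adj u v → φ u = φ v ∨ K.Adj (φ u) (φ v) := by
      intro u v hadj
      by_cases hu : u ∈ H
      · by_cases hv : v ∈ H
        · right
          rw [hφ1 u hu, hφ1 v hv]
          have hA := torso_adj (η := η) hadj
            (by rw [rho_H hu, rho_H hv]; simp only [ne_eq, Sum.inl.injEq]; exact hadj.ne)
          rwa [rho_H hu, rho_H hv] at hA
        · exact haux u v hadj hu hv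
      · by_cases hv : v ∈ H
        · rcases haux v u hadj.symm hv hu with h | h
          · exact Or.inl h.symm
          · exact Or.inr h.symm
        · left
          have hc : compOf G H u = compOf G H v :=
            sameComp (G := G) (H := H) hadj hu hv
          simp only [hφdef, if_neg hu, if_neg hv, hc]
    -- the separator in G
    set FS : Set V := (Sum.inl ⁻¹' F ∩ H) ∪
        (⋃ D ∈ {D : Set V | IsComp G H D ∧ Sum.inr D ∈ F}, nbhdOf G D) ∪
        f '' Set.Iic K₀ with hFSdef
    have hFS : FS.Finite := by
      refine Set.Finite.union (Set.Finite.union ?_ ?_) ?_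
      · exact ((hFfin.preimage Sum.inl_injective.injOn).inter_of_left _)
      · refine Set.Finite.biUnion ?_ (fun D hD => hadh D hD.1)
        exact Set.Finite.subset (hFfin.preimage Sum.inr_injective.injOn)
          (fun D hD => hD.2)
      · exact (Set.finite_Iic K₀).image f
    refine ⟨FS, hFS, ?_⟩
    intro u hu s hs p
    obtain ⟨n, rfl⟩ := hs
    by_cases hps : ∃ x ∈ p.support, x ∈ FS
    · exact hps
    · exfalso
      push_neg at hps
      have hnK : K₀ < n := by
        by_contra h
        push_neg at h
        exact hps (f n) p.end_mem_support (Or.inr ⟨n, h, rfl⟩)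
      have hcrossD : ∀ D : Set V, IsComp G H D → nbhdOf G D ⊆ FS →
          ∀ y ∈ p.support, y ∉ D := by
        intro D hD hsub y hy hyD
        have huD : u ∉ D := fun h => isComp_not_mem_H hD h (hUH hu)
        obtain ⟨x, hx, hxN⟩ := cross (p.takeUntil y hy) huD hyD
        exact hps x (p.support_takeUntil_subset hy hx) (hsub hxN)
      have havoid : ∀ y ∈ p.support, φ y ∉ F := by
        intro y hy hyF
        by_cases h1 : y ∈ H
        · rw [hφ1 y h1] at hyF
          exact hps y hy (Or.inl (Or.inl ⟨hyF, h1⟩))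
        · have hDc : IsComp G H (compOf G H y) := isComp_compOf h1
          by_cases h2 : compOf G H y ∈ Dfin G H
          · rw [hφ2 y h1 h2] at hyF
            exact hcrossD _ hDc
              (fun x hx => Or.inl (Or.inr (Set.mem_biUnion ⟨hDc, hyF⟩ hx)))
              y hy (mem_compOf_self h1)
          · rw [hφ3 y h1 h2] at hyF
            exact hcrossD _ hDc
              (fun a ha => Or.inl (Or.inl ⟨hσ2 _ hyF a ha, nbhd_subset_H hDc ha⟩))
              y hy (mem_compOf_self h1)
      obtain ⟨q₁, hq₁⟩ := walkProj (K := K) φ hhom p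
      have hWnotF : ∀ k, K₀ < k → W k ∉ F := fun k hk h => absurd (hK₀ k h) (by omega)
      have hφn : φ (f n) ∉ F := havoid (f n) p.end_mem_support
      obtain ⟨qb, hqb⟩ : ∃ qb : K.Walk (φ (f n)) (W n), ∀ x ∈ qb.support, x ∉ F := by
        by_cases h1 : f n ∈ H
        · refine ⟨Walk.nil.copy (by rw [hφ1 (f n) h1, hW1 n h1]) rfl, ?_⟩
          intro x hx
          rw [Walk.support_copy] at hx
          simp only [Walk.support_nil, List.mem_singleton] at hx
          rw [hx]
          exact hWnotF n hnK
        · by_cases h2 : compOf G H (f n) ∈ Dfin G H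
          · refine ⟨Walk.nil.copy (by rw [hφ2 (f n) h1 h2, hW2 n h1 h2]) rfl, ?_⟩
            intro x hx
            rw [Walk.support_copy] at hx
            simp only [Walk.support_nil, List.mem_singleton] at hx
            rw [hx]
            exact hWnotF n hnK
          · have hDc : IsComp G H (compOf G H (f n)) := isComp_compOf h1
            have hb := hNmem n h1
            have hσm := hσ1 _ hDc
            by_cases he : σ (compOf G H (f n)) = f (nextH n)
            · refine ⟨Walk.nil.copy (by rw [hφ3 (f n) h1 h2, hW3 n h1 h2, he]) rfl, ?_⟩
              intro x hx
              rw [Walk.support_copy] at hx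
              simp only [Walk.support_nil, List.mem_singleton] at hx
              rw [hx]
              exact hWnotF n hnK
            · have hadj2 : K.Adj (Sum.inl (σ (compOf G H (f n)))) (Sum.inl (f (nextH n))) :=
                clique hη (not_dfin_dinf hDc h2) hσm hb he
              refine ⟨(Walk.cons hadj2 Walk.nil).copy
                (hφ3 (f n) h1 h2).symm (hW3 n h1 h2).symm, ?_⟩
              intro x hx
              rw [Walk.support_copy] at hx
              simp only [Walk.support_cons, Walk.support_nil, List.mem_cons,
                List.mem_singleton, List.not_mem_nil, or_false] at hx
              rcases hx with rfl | rfl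
              · rw [← hφ3 (f n) h1 h2]; exact hφn
              · rw [← hW3 n h1 h2]; exact hWnotF n hnK
      obtain ⟨q₂, hq₂⟩ := lazyWalk W hlazy n (ns n) hmono.le_apply
      have hq₂F : ∀ x ∈ q₂.support, x ∉ F := by
        intro x hx hxF
        obtain ⟨k, hk1, hk2, hk3⟩ := hq₂ x hx
        rw [← hk3] at hxF
        exact hWnotF k (by omega) hxF
      have hq := hFsep (Sum.inl u) ⟨u, hu, rfl⟩ (r n) (Set.mem_range_self n)
        (((q₁.append qb).append q₂).copy (by rw [hφ1 u (hUH hu)]) (hrW n).symm)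
      obtain ⟨x, hx, hxF⟩ := hq
      rw [Walk.support_copy, Walk.mem_support_append_iff,
        Walk.mem_support_append_iff] at hx
      rcases hx with (hx | hx) | hx
      · obtain ⟨y, hy, rfl⟩ := hq₁ x hx
        exact havoid y hy hxF
      · exact hqb x hx hxF
      · exact hq₂F x hx hxF
end
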